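/- Large negative weights determine the index by the red subgraph: Let Γ be a connected weighted graph on {1,…,N} whose black edges carry fixed positive weights and whose red edges are e_1,…,e_R (R ≥ 1); fix α_1,…,α_R > 0 and for t > 0 let Γ(t) be the weighted graph with weight −tα_i on e_i and the fixed positive weights on the black edges. Let G_− denote the spanning subgraph on all N vertices whose edge set is {e_1,…,e_R}, and c(G_−) its number of connected components. Then there exists t_0 > 0 such that for all t > t_0 the spectral index of Γ(t) is (n_−, n_0, n_+) = (c(G_−) − 1, 1, N − c(G_−)); in particular, L(Γ(t)) has at least one positive eigenvalue for all sufficiently large t. -/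

import Mathlib

open Finset
open Matrix
open scoped Classical

/-- The graph Laplacian of a weighted graph on `{1,…,N}`. -/
noncomputable def lapl {N : ℕ} (γ : Fin N → Fin N → ℝ) : Matrix (Fin N) (Fin N) ℝ :=
  Matrix.of fun i j =>
    if i = j then -(∑ k ∈ univ.filter (fun k => k ≠ i), γ i k) else γ i j

/-- The simple graph on `Fin N` whose edges are the (ordered) pairs in `T`. -/
def edgeGraph {N : ℕ} (T : Finset (Fin N × Fin N)) : SimpleGraph (Fin N) :=
  SimpleGraph.fromRel fun a b => (a, b) ∈ T

/-- The product of the weights of the edges in `T`. -/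
noncomputable def prodWeight {N : ℕ} (γ : Fin N → Fin N → ℝ)
    (T : Finset (Fin N × Fin N)) : ℝ :=
  ∏ p ∈ T, γ p.1 p.2

/-- The black edges: the (ordered) pairs carrying a nonzero weight. -/
noncomputable def blackE {N : ℕ} (γ : Fin N → Fin N → ℝ) : Finset (Fin N × Fin N) :=
  univ.filter fun p => p.1 < p.2 ∧ γ p.1 p.2 ≠ 0

/-- The number of negative eigenvalues (`n₋`) of a real symmetric matrix,
counted with multiplicity. -/
noncomputable def negCount {N : ℕ} (A : Matrix (Fin N) (Fin N) ℝ)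
    (hA : A.IsHermitian) : ℕ :=
  (univ.filter fun i => hA.eigenvalues i < 0).card

/-- The number of zero eigenvalues (`n₀`) of a real symmetric matrix,
counted with multiplicity. -/
noncomputable def zeroCount {N : ℕ} (A : Matrix (Fin N) (Fin N) ℝ)
    (hA : A.IsHermitian) : ℕ :=
  (univ.filter fun i => hA.eigenvalues i = 0).card

/-- The number of positive eigenvalues (`n₊`) of a real symmetric matrix,
counted with multiplicity. -/
noncomputable def posCount {N : ℕ} (A : Matrix (Fin N) (Fin N) ℝ)
    (hA : A.IsHermitian) : ℕ :=
  (univ.filter fun i => 0 < hA.eigenvalues i).card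


section Spec
variable {N : ℕ} {A : Matrix (Fin N) (Fin N) ℝ} (hA : A.IsHermitian)

noncomputable def ecoord (x : Fin N → ℝ) (i : Fin N) : ℝ :=
  ⇑(hA.eigenvectorBasis i) ⬝ᵥ x

lemma dot_eq_inner (x y : EuclideanSpace ℝ (Fin N)) :
    (inner ℝ x y : ℝ) = ⇑x ⬝ᵥ ⇑y := by
  simp [PiLp.inner_apply, dotProduct, RCLike.inner_apply, mul_comm]

lemma sum_ecoord_smul (x : Fin N → ℝ) :
    ∑ i, ecoord hA x i • ⇑(hA.eigenvectorBasis i) = x := by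
  have h2 : ∀ i, hA.eigenvectorBasis.repr ((WithLp.equiv 2 _).symm x) i = ecoord hA x i := by
    intro i
    rw [hA.eigenvectorBasis.repr_apply_apply, dot_eq_inner]
    rfl
  calc ∑ i, ecoord hA x i • ⇑(hA.eigenvectorBasis i)
      = ∑ i, hA.eigenvectorBasis.repr ((WithLp.equiv 2 _).symm x) i • ⇑(hA.eigenvectorBasis i) := by
        simp only [h2]
    _ = x := by
      have h := congrArg WithLp.ofLp (hA.eigenvectorBasis.sum_repr ((WithLp.equiv 2 _).symm x))
      simpa [WithLp.ofLp_sum, WithLp.ofLp_smul] using h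

lemma eb_dot_eb (i j : Fin N) :
    ⇑(hA.eigenvectorBasis i) ⬝ᵥ ⇑(hA.eigenvectorBasis j) = if i = j then 1 else 0 := by
  rw [← dot_eq_inner, orthonormal_iff_ite.mp hA.eigenvectorBasis.orthonormal]
end Spec

lemma dotProduct_sum' {n ι : Type*} [Fintype n] (s : Finset ι) (v : n → ℝ) (f : ι → n → ℝ) :
    v ⬝ᵥ (∑ i ∈ s, f i) = ∑ i ∈ s, v ⬝ᵥ f i := by
  unfold dotProduct
  rw [Finset.sum_comm]
  congr 1; funext j
  rw [← Finset.mul_sum]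
  congr 1
  simp

lemma sum_dotProduct' {n ι : Type*} [Fintype n] (s : Finset ι) (v : n → ℝ) (f : ι → n → ℝ) :
    (∑ i ∈ s, f i) ⬝ᵥ v = ∑ i ∈ s, f i ⬝ᵥ v := by
  rw [dotProduct_comm, dotProduct_sum']
  simp [dotProduct_comm]

lemma mulVec_sum' {n m ι : Type*} [Fintype n] [Fintype m] (s : Finset ι)
    (A : Matrix m n ℝ) (f : ι → n → ℝ) :
    A.mulVec (∑ i ∈ s, f i) = ∑ i ∈ s, A.mulVec (f i) := by
  funext j
  rw [Matrix.mulVec, dotProduct_sum']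
  simp [Matrix.mulVec]

section Spec2
variable {N : ℕ} {A : Matrix (Fin N) (Fin N) ℝ} (hA : A.IsHermitian)

lemma mulVec_expand (x : Fin N → ℝ) :
    A.mulVec x = ∑ i, (ecoord hA x i * hA.eigenvalues i) • ⇑(hA.eigenvectorBasis i) := by
  conv_lhs => rw [← sum_ecoord_smul hA x]
  rw [mulVec_sum']
  congr 1
  funext i
  rw [Matrix.mulVec_smul, hA.mulVec_eigenvectorBasis, smul_smul]

lemma form_expand (x : Fin N → ℝ) :
    x ⬝ᵥ A.mulVec x = ∑ i, hA.eigenvalues i * (ecoord hA x i)^2 := by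
  rw [mulVec_expand hA x]
  rw [dotProduct_sum']
  congr 1
  funext i
  rw [dotProduct_smul, dotProduct_comm]
  show (ecoord hA x i * hA.eigenvalues i) * ecoord hA x i = _
  ring

lemma parseval (x : Fin N → ℝ) :
    x ⬝ᵥ x = ∑ i, (ecoord hA x i)^2 := by
  rw [show x ⬝ᵥ x = x ⬝ᵥ (∑ i, ecoord hA x i • ⇑(hA.eigenvectorBasis i)) from by
    rw [sum_ecoord_smul]]
  rw [dotProduct_sum']
  congr 1
  funext i
  rw [dotProduct_smul, dotProduct_comm]
  show ecoord hA x i * ecoord hA x i = _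
  ring

lemma ecoord_linear (i : Fin N) (c : ℝ) (x y : Fin N → ℝ) :
    ecoord hA (c • x + y) i = c * ecoord hA x i + ecoord hA y i := by
  unfold ecoord
  rw [dotProduct_add, dotProduct_smul]
  rfl

/-- the span of the eigenvectors with index in S -/
noncomputable def espan (S : Finset (Fin N)) : Submodule ℝ (Fin N → ℝ) :=
  Submodule.span ℝ (Set.range (fun i : S => ⇑(hA.eigenvectorBasis (i : Fin N))))

lemma mem_espan_iff (S : Finset (Fin N)) (x : Fin N → ℝ) :
    x ∈ espan hA S ↔ ∀ i ∉ S, ecoord hA x i = 0 := by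
  constructor
  · intro hx i hi
    induction hx using Submodule.span_induction with
    | mem v hv =>
        obtain ⟨j, rfl⟩ := hv
        show ⇑(hA.eigenvectorBasis i) ⬝ᵥ ⇑(hA.eigenvectorBasis (j:Fin N)) = 0
        rw [eb_dot_eb]
        simp only [ite_eq_right_iff]
        intro h; exact absurd (h ▸ j.2) hi
    | zero => simp [ecoord]
    | add u v _ _ hu hv =>
        unfold ecoord at *
        rw [dotProduct_add, hu, hv, add_zero]
    | smul c u _ hu =>
        unfold ecoord at *
        rw [dotProduct_smul, hu, smul_zero]
  · intro h
    rw [← sum_ecoord_smul hA x]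
    apply Submodule.sum_mem
    intro i _
    by_cases hi : i ∈ S
    · exact Submodule.smul_mem _ _ (Submodule.subset_span ⟨⟨i, hi⟩, rfl⟩)
    · rw [h i hi]; simp

lemma finrank_espan (S : Finset (Fin N)) :
    Module.finrank ℝ (espan hA S) = S.card := by
  rw [espan, finrank_span_eq_card]
  · simp
  · exact (hA.eigenvectorBasis.orthonormal.linearIndependent).comp
      (fun i : S => (i : Fin N)) Subtype.val_injective |>.map'
      (WithLp.linearEquiv 2 ℝ (Fin N → ℝ)).toLinearMap (WithLp.linearEquiv 2 ℝ (Fin N → ℝ)).ker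

end Spec2

section Spec3
variable {N : ℕ} {A : Matrix (Fin N) (Fin N) ℝ} (hA : A.IsHermitian)

noncomputable def negCount' {N : ℕ} (A : Matrix (Fin N) (Fin N) ℝ)
    (hA : A.IsHermitian) : ℕ :=
  (univ.filter fun i => hA.eigenvalues i < 0).card

lemma subspace_inter (W P : Submodule ℝ (Fin N → ℝ))
    (h : N < Module.finrank ℝ W + Module.finrank ℝ P) :
    ∃ x, x ∈ W ∧ x ∈ P ∧ x ≠ 0 := by
  have h1 := Submodule.finrank_sup_add_finrank_inf_eq W P
  have h2 : Module.finrank ℝ (W ⊔ P : Submodule ℝ (Fin N → ℝ)) ≤ N := by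
    have := Submodule.finrank_le (W ⊔ P : Submodule ℝ (Fin N → ℝ))
    simpa using this
  have h3 : 0 < Module.finrank ℝ (W ⊓ P : Submodule ℝ (Fin N → ℝ)) := by omega
  have h4 : (W ⊓ P : Submodule ℝ (Fin N → ℝ)) ≠ ⊥ := by
    intro hb
    rw [hb, finrank_bot] at h3
    exact lt_irrefl 0 h3
  obtain ⟨x, hx, hx0⟩ := Submodule.exists_mem_ne_zero_of_ne_bot h4
  exact ⟨x, hx.1, hx.2, hx0⟩

lemma negCount_ge (W : Submodule ℝ (Fin N → ℝ))
    (hW : ∀ x ∈ W, x ≠ 0 → x ⬝ᵥ A.mulVec x < 0) :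
    Module.finrank ℝ W ≤ (univ.filter fun i => hA.eigenvalues i < 0).card := by
  by_contra hlt
  push_neg at hlt
  set S := univ.filter fun i : Fin N => ¬ hA.eigenvalues i < 0 with hS
  have hcard : (univ.filter fun i : Fin N => hA.eigenvalues i < 0).card + S.card = N := by
    rw [hS, Finset.card_filter_add_card_filter_not]
    simp
  obtain ⟨x, hxW, hxP, hx0⟩ := subspace_inter W (espan hA S) (by
    rw [finrank_espan]; omega)
  have hneg := hW x hxW hx0
  have hpos : 0 ≤ x ⬝ᵥ A.mulVec x := by
    rw [form_expand hA x]
    apply Finset.sum_nonneg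
    intro i _
    by_cases hi : i ∈ S
    · have h1 : ¬ hA.eigenvalues i < 0 := by
        rw [hS] at hi; exact (Finset.mem_filter.mp hi).2
      have h2 : 0 ≤ (ecoord hA x i)^2 := sq_nonneg _
      nlinarith
    · rw [(mem_espan_iff hA S x).mp hxP i hi]
      simp
  linarith

lemma posCount_ge (W : Submodule ℝ (Fin N → ℝ))
    (hW : ∀ x ∈ W, x ≠ 0 → 0 < x ⬝ᵥ A.mulVec x) :
    Module.finrank ℝ W ≤ (univ.filter fun i => 0 < hA.eigenvalues i).card := by
  by_contra hlt
  push_neg at hlt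
  set S := univ.filter fun i : Fin N => ¬ 0 < hA.eigenvalues i with hS
  have hcard : (univ.filter fun i : Fin N => 0 < hA.eigenvalues i).card + S.card = N := by
    rw [hS, Finset.card_filter_add_card_filter_not]
    simp
  obtain ⟨x, hxW, hxP, hx0⟩ := subspace_inter W (espan hA S) (by
    rw [finrank_espan]; omega)
  have hneg := hW x hxW hx0
  have hpos : x ⬝ᵥ A.mulVec x ≤ 0 := by
    rw [form_expand hA x]
    apply Finset.sum_nonpos
    intro i _
    by_cases hi : i ∈ S
    · have h1 : ¬ 0 < hA.eigenvalues i := by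
        rw [hS] at hi; exact (Finset.mem_filter.mp hi).2
      have h2 : 0 ≤ (ecoord hA x i)^2 := sq_nonneg _
      nlinarith
    · rw [(mem_espan_iff hA S x).mp hxP i hi]
      simp
  linarith

lemma zeroCount_ge (x : Fin N → ℝ) (hx0 : x ≠ 0) (hker : A.mulVec x = 0) :
    1 ≤ (univ.filter fun i => hA.eigenvalues i = 0).card := by
  rw [Finset.one_le_card]
  by_contra hemp
  rw [Finset.not_nonempty_iff_eq_empty, Finset.filter_eq_empty_iff] at hemp
  have hdet : A.det ≠ 0 := by
    rw [hA.det_eq_prod_eigenvalues]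
    apply Finset.prod_ne_zero_iff.mpr
    intro i _
    exact_mod_cast hemp (Finset.mem_univ i)
  have : Function.Injective A.mulVec := Matrix.mulVec_injective_iff_isUnit.mpr
    (Matrix.isUnit_iff_isUnit_det A |>.mpr (isUnit_iff_ne_zero.mpr hdet))
  exact hx0 (this (by rw [hker, Matrix.mulVec_zero]))

lemma counts_sum :
    (univ.filter fun i => hA.eigenvalues i < 0).card
    + (univ.filter fun i => hA.eigenvalues i = 0).card
    + (univ.filter fun i => 0 < hA.eigenvalues i).card = N := by
  have e1 : (univ.filter fun i : Fin N => ¬ hA.eigenvalues i < 0) =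
      (univ.filter fun i : Fin N => hA.eigenvalues i = 0)
        ∪ (univ.filter fun i : Fin N => 0 < hA.eigenvalues i) := by
    ext i
    simp only [Finset.mem_filter, Finset.mem_union, Finset.mem_univ, true_and]
    constructor
    · intro h
      rcases lt_trichotomy (hA.eigenvalues i) 0 with h' | h' | h'
      · exact absurd h' h
      · exact Or.inl h'
      · exact Or.inr h'
    · intro h
      rcases h with h | h
      · rw [h]; exact lt_irrefl 0
      · exact not_lt_of_gt h
  have e2 : Disjoint (univ.filter fun i : Fin N => hA.eigenvalues i = 0)
      (univ.filter fun i : Fin N => 0 < hA.eigenvalues i) := by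
    rw [Finset.disjoint_left]
    intro i h1 h2
    have := (Finset.mem_filter.mp h1).2
    have := (Finset.mem_filter.mp h2).2
    linarith
  have h := Finset.card_filter_add_card_filter_not
    (p := fun i : Fin N => hA.eigenvalues i < 0) (s := (univ : Finset (Fin N)))
  rw [e1, Finset.card_union_of_disjoint e2] at h
  simpa [add_assoc] using h

end Spec3

section Spec4
variable {N : ℕ} {A : Matrix (Fin N) (Fin N) ℝ} (hA : A.IsHermitian)

lemma herm_transpose_eq (hA : A.IsHermitian) : Aᵀ = A := by
  ext i j
  rw [Matrix.transpose_apply]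
  conv_lhs => rw [← hA]
  rw [Matrix.conjTranspose_apply]
  simp

lemma vecMul_herm (hA : A.IsHermitian) (v : Fin N → ℝ) : v ᵥ* A = A *ᵥ v := by
  rw [← Matrix.vecMul_transpose, herm_transpose_eq hA]

lemma eb_dot_mulVec (x : Fin N → ℝ) (i : Fin N) :
    ⇑(hA.eigenvectorBasis i) ⬝ᵥ A.mulVec x = hA.eigenvalues i * ecoord hA x i := by
  rw [Matrix.dotProduct_mulVec]
  rw [vecMul_herm hA]
  rw [hA.mulVec_eigenvectorBasis, smul_dotProduct]
  rfl

lemma ker_iff_ecoord (x : Fin N → ℝ) :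
    A.mulVec x = 0 ↔ ∀ i, hA.eigenvalues i ≠ 0 → ecoord hA x i = 0 := by
  constructor
  · intro h i hi
    have := eb_dot_mulVec hA x i
    rw [h, dotProduct_zero] at this
    rcases mul_eq_zero.mp this.symm with h' | h'
    · exact absurd h' hi
    · exact h'
  · intro h
    rw [mulVec_expand hA x]
    apply Finset.sum_eq_zero
    intro i _
    by_cases hi : hA.eigenvalues i = 0
    · rw [hi, mul_zero, zero_smul]
    · rw [h i hi, zero_mul, zero_smul]

lemma ker_eq_espan :
    LinearMap.ker A.mulVecLin = espan hA (univ.filter fun i => hA.eigenvalues i = 0) := by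
  ext x
  rw [LinearMap.mem_ker, Matrix.mulVecLin_apply, ker_iff_ecoord hA, mem_espan_iff]
  constructor
  · intro h i hi
    simp only [Finset.mem_filter, Finset.mem_univ, true_and] at hi
    exact h i hi
  · intro h i hi
    apply h
    simp only [Finset.mem_filter, Finset.mem_univ, true_and]
    exact hi

lemma finrank_ker_eq :
    Module.finrank ℝ (LinearMap.ker A.mulVecLin)
      = (univ.filter fun i => hA.eigenvalues i = 0).card := by
  rw [ker_eq_espan hA, finrank_espan]

end Spec4


section Lapl
variable {N : ℕ} (γ : Fin N → Fin N → ℝ)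

lemma lapl_isHermitian (hsym : ∀ a b, γ a b = γ b a) : (lapl γ).IsHermitian := by
  unfold Matrix.IsHermitian
  ext i j
  simp only [Matrix.conjTranspose_apply, lapl, Matrix.of_apply, Matrix.transpose_apply]
  by_cases h : i = j
  · subst h; simp
  · rw [if_neg h, if_neg (fun h' => h h'.symm)]
    simp [hsym j i]

lemma lapl_mulVec (hdiag : ∀ a, γ a a = 0) (x : Fin N → ℝ) (i : Fin N) :
    ((lapl γ).mulVec x) i = (∑ j, γ i j * x j) - (∑ j, γ i j) * x i := by
  show (lapl γ) i ⬝ᵥ x = _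
  unfold dotProduct
  have hsplit : ∀ f : Fin N → ℝ, ∑ j, f j = (∑ j ∈ univ.erase i, f j) + f i := by
    intro f
    rw [Finset.sum_erase_add _ _ (Finset.mem_univ i)]
  rw [hsplit (fun j => lapl γ i j * x j), hsplit (fun j => γ i j * x j), hsplit (fun j => γ i j)]
  have h1 : ∀ j ∈ univ.erase i, lapl γ i j * x j = γ i j * x j := by
    intro j hj
    have : i ≠ j := fun h => (Finset.mem_erase.mp hj).1 h.symm
    simp [lapl, this]
  rw [Finset.sum_congr rfl h1]
  have h2 : lapl γ i i = -(∑ k ∈ univ.filter (fun k => k ≠ i), γ i k) := by simp [lapl]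
  have h3 : univ.filter (fun k => k ≠ i) = univ.erase i := by
    ext k; simp [Finset.mem_erase, and_comm]
  have h4 : ∑ k ∈ univ.erase i, γ i k = (∑ k ∈ univ.erase i, γ i k) + γ i i - γ i i := by ring
  rw [h2, h3]
  rw [hdiag i]
  ring

lemma lapl_mulVec_const (hdiag : ∀ a, γ a a = 0) (c : ℝ) :
    (lapl γ).mulVec (fun _ => c) = 0 := by
  funext i
  rw [show ((lapl γ).mulVec (fun _ => c)) i = ((lapl γ).mulVec (fun _ => c)) i from rfl,
    lapl_mulVec γ hdiag]
  show (∑ j, γ i j * c) - (∑ j, γ i j) * c = 0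
  rw [← Finset.sum_mul]
  ring

lemma lapl_mulVec_eq_zero (hdiag : ∀ a, γ a a = 0) (x : Fin N → ℝ)
    (h : ∀ i j, γ i j ≠ 0 → x i = x j) : (lapl γ).mulVec x = 0 := by
  funext i
  rw [lapl_mulVec γ hdiag, Finset.sum_mul, ← Finset.sum_sub_distrib]
  apply Finset.sum_eq_zero
  intro j _
  by_cases hg : γ i j = 0
  · rw [hg]; ring
  · rw [h i j hg]; ring

lemma lapl_form (hsym : ∀ a b, γ a b = γ b a) (hdiag : ∀ a, γ a a = 0) (x : Fin N → ℝ) :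
    x ⬝ᵥ (lapl γ).mulVec x = -(1/2) * ∑ i, ∑ j, γ i j * (x i - x j)^2 := by
  have per : ∀ i : Fin N, x i * ((lapl γ).mulVec x) i
      = (∑ j, γ i j * x i * x j) - (∑ j, γ i j * x i^2) := by
    intro i
    rw [lapl_mulVec γ hdiag]
    have l1 : x i * ∑ j, γ i j * x j = ∑ j, γ i j * x i * x j := by
      rw [Finset.mul_sum]; congr 1; funext j; ring
    have l2 : x i * ((∑ j, γ i j) * x i) = ∑ j, γ i j * x i^2 := by
      calc x i * ((∑ j, γ i j) * x i) = (∑ j, γ i j) * x i^2 := by ring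
        _ = ∑ j, γ i j * x i^2 := by rw [Finset.sum_mul]
    rw [mul_sub, l1, l2]
  have expand1 : x ⬝ᵥ (lapl γ).mulVec x
      = (∑ i, ∑ j, γ i j * x i * x j) - (∑ i, ∑ j, γ i j * x i^2) := by
    unfold dotProduct
    rw [Finset.sum_congr rfl (fun i _ => per i), Finset.sum_sub_distrib]
  have swap : ∑ i, ∑ j, γ i j * (x j)^2 = ∑ i, ∑ j, γ i j * (x i)^2 := by
    rw [Finset.sum_comm]
    congr 1; funext i
    congr 1; funext j
    rw [hsym j i]
  have expand2 : ∑ i, ∑ j, γ i j * (x i - x j)^2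
      = (∑ i, ∑ j, γ i j * x i^2) - 2*(∑ i, ∑ j, γ i j * x i * x j)
        + (∑ i, ∑ j, γ i j * x j^2) := by
    have inner : ∀ i : Fin N, ∑ j, γ i j * (x i - x j)^2
        = (∑ j, γ i j * x i^2) - 2*(∑ j, γ i j * x i * x j) + (∑ j, γ i j * x j^2) := by
      intro i
      rw [Finset.mul_sum, ← Finset.sum_sub_distrib, ← Finset.sum_add_distrib]
      congr 1; funext j; ring
    rw [Finset.sum_congr rfl (fun i _ => inner i), Finset.sum_add_distrib,
      Finset.sum_sub_distrib, ← Finset.mul_sum]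
  rw [expand1, expand2]
  linarith [swap]

end Lapl

section Graph
variable {N : ℕ}

lemma reachable_const {V : Type*} (G : SimpleGraph V) (x : V → ℝ)
    (h : ∀ a b, G.Adj a b → x a = x b) {a b : V} (hr : G.Reachable a b) :
    x a = x b := by
  obtain ⟨w⟩ := hr
  induction w with
  | nil => rfl
  | cons h' p ih => exact (h _ _ h').trans ih

/-- the linear map from functions on components to functions on vertices -/
noncomputable def compMap (G : SimpleGraph (Fin N)) :
    (G.ConnectedComponent → ℝ) →ₗ[ℝ] (Fin N → ℝ) where
  toFun f := fun i => f (G.connectedComponentMk i)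
  map_add' f g := rfl
  map_smul' c f := rfl

lemma compMap_injective (G : SimpleGraph (Fin N)) : Function.Injective (compMap G) := by
  intro f g h
  funext cc
  obtain ⟨v, rfl⟩ := cc.exists_rep
  exact congrFun h v

lemma mem_range_compMap_iff (G : SimpleGraph (Fin N)) (x : Fin N → ℝ) :
    x ∈ LinearMap.range (compMap G) ↔ ∀ a b, G.Adj a b → x a = x b := by
  constructor
  · rintro ⟨f, rfl⟩ a b hab
    show f _ = f _
    congr 1
    exact SimpleGraph.ConnectedComponent.sound hab.reachable
  · intro h
    refine ⟨SimpleGraph.ConnectedComponent.lift x ?_, ?_⟩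
    · intro v w p _
      exact reachable_const G x h ⟨p⟩
    · funext i
      rfl

lemma finrank_range_compMap (G : SimpleGraph (Fin N)) :
    Module.finrank ℝ (LinearMap.range (compMap G)) = Nat.card G.ConnectedComponent := by
  haveI : Fintype G.ConnectedComponent := Fintype.ofFinite _
  rw [LinearMap.finrank_range_of_inj (compMap_injective G)]
  rw [Module.finrank_pi ℝ]
  exact (Nat.card_eq_fintype_card).symm

lemma card_components_pos (G : SimpleGraph (Fin N)) (hN : 0 < N) :
    0 < Nat.card G.ConnectedComponent := by
  haveI : Fintype G.ConnectedComponent := Fintype.ofFinite _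
  rw [Nat.card_eq_fintype_card]
  haveI : Nonempty G.ConnectedComponent := ⟨G.connectedComponentMk ⟨0, hN⟩⟩
  exact Fintype.card_pos

lemma card_components_le (G : SimpleGraph (Fin N)) :
    Nat.card G.ConnectedComponent ≤ N := by
  haveI : Fintype G.ConnectedComponent := Fintype.ofFinite _
  rw [Nat.card_eq_fintype_card]
  have := Fintype.card_le_of_surjective (G.connectedComponentMk)
    (fun cc => cc.exists_rep)
  simpa using this

end Graph

set_option maxHeartbeats 1000000 in
/-- **Large negative weights determine the index by the red subgraph.**
Let `Γ` be connected with positive black weights `γ` and red edges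
`e₁,…,e_R` (`R ≥ 1`); fix `α_i > 0` and give `e_i` the weight `−tα_i`.
Let `c` be the number of connected components of the spanning subgraph `G₋`
on all `N` vertices with edge set `{e₁,…,e_R}`.  Then for all sufficiently
large `t`, the spectral index of `L(Γ(t))` is
`(n₋, n₀, n₊) = (c − 1, 1, N − c)`; in particular there is at least one
positive eigenvalue. -/
theorem large_negative_weights_index
    {N R : ℕ} (hR : 0 < R) (γ : Fin N → Fin N → ℝ)
    (hsym : ∀ a b, γ a b = γ b a) (hdiag : ∀ a, γ a a = 0)
    (hpos : ∀ a b, 0 ≤ γ a b)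
    (e : Fin R → Fin N × Fin N)
    (he : ∀ i, (e i).1 < (e i).2) (hinj : Function.Injective e)
    (hnotblack : ∀ i, γ (e i).1 (e i).2 = 0)
    (hconn : (edgeGraph (blackE γ ∪ univ.image e)).Connected)
    (α : Fin R → ℝ) (hα : ∀ i, 0 < α i) :
    ∃ t₀ > (0 : ℝ), ∀ t > t₀,
      ∀ hH : (lapl (fun a b => γ a b -
          ∑ m ∈ univ.filter (fun m => e m = (a, b) ∨ e m = (b, a)), t * α m)).IsHermitian,
        negCount _ hH = Nat.card (edgeGraph (univ.image e)).ConnectedComponent - 1 ∧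
        zeroCount _ hH = 1 ∧
        posCount _ hH = N - Nat.card (edgeGraph (univ.image e)).ConnectedComponent := by
  classical
  have hN : 0 < N := (e ⟨0, hR⟩).1.pos
  set G := edgeGraph (univ.image e) with hGdef
  set c := Nat.card G.ConnectedComponent with hcdef
  set β : Fin N → Fin N → ℝ := fun a b =>
    ∑ m ∈ univ.filter (fun m => e m = (a, b) ∨ e m = (b, a)), α m with hβdef
  have hβsym : ∀ a b, β a b = β b a := by
    intro a b
    apply Finset.sum_congr _ (fun m _ => rfl)
    apply Finset.filter_congr
    intro m _
    constructor <;> (intro h; tauto)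
  have hfilter_diag : ∀ a : Fin N,
      univ.filter (fun m : Fin R => e m = (a, a) ∨ e m = (a, a)) = ∅ := by
    intro a
    rw [Finset.filter_eq_empty_iff]
    intro m _
    intro h
    have h' : e m = (a, a) := by tauto
    have := he m
    rw [h'] at this
    exact lt_irrefl a this
  have hβdiag : ∀ a, β a a = 0 := by
    intro a
    show (∑ m ∈ univ.filter (fun m => e m = (a, a) ∨ e m = (a, a)), α m) = 0
    rw [hfilter_diag a, Finset.sum_empty]
  have hβnonneg : ∀ a b, 0 ≤ β a b := by
    intro a b
    exact Finset.sum_nonneg (fun m _ => le_of_lt (hα m))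
  have hβpos : ∀ a b m, (e m = (a, b) ∨ e m = (b, a)) → 0 < β a b := by
    intro a b m hm
    exact Finset.sum_pos (fun i _ => hα i)
      ⟨m, Finset.mem_filter.mpr ⟨Finset.mem_univ m, hm⟩⟩
  have hβne_adj : ∀ a b, β a b ≠ 0 → G.Adj a b := by
    intro a b hne
    have hnonempty : ∃ m, e m = (a, b) ∨ e m = (b, a) := by
      by_contra hcon
      push_neg at hcon
      apply hne
      show (∑ m ∈ univ.filter (fun m => e m = (a, b) ∨ e m = (b, a)), α m) = 0
      rw [show univ.filter (fun m : Fin R => e m = (a, b) ∨ e m = (b, a)) = ∅ from by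
        rw [Finset.filter_eq_empty_iff]
        intro m _ h
        rcases h with h | h
        · exact (hcon m).1 h
        · exact (hcon m).2 h]
      exact Finset.sum_empty
    obtain ⟨m, hm⟩ := hnonempty
    have hne' : a ≠ b := by
      rcases hm with h | h
      · intro hab; have := he m; rw [h] at this; exact absurd (hab ▸ this) (lt_irrefl b)
      · intro hab; have := he m; rw [h] at this; exact absurd (hab ▸ this) (lt_irrefl a)
    rw [hGdef]
    unfold edgeGraph
    rw [SimpleGraph.fromRel_adj]
    refine ⟨hne', ?_⟩
    rcases hm with h | h
    · exact Or.inl (Finset.mem_image.mpr ⟨m, Finset.mem_univ m, h⟩)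
    · exact Or.inr (Finset.mem_image.mpr ⟨m, Finset.mem_univ m, h⟩)
  have hadj_β : ∀ a b, G.Adj a b → 0 < β a b := by
    intro a b hab
    rw [hGdef] at hab
    unfold edgeGraph at hab
    rw [SimpleGraph.fromRel_adj] at hab
    rcases hab.2 with h | h
    · obtain ⟨m, _, hm⟩ := Finset.mem_image.mp h
      exact hβpos a b m (Or.inl hm)
    · obtain ⟨m, _, hm⟩ := Finset.mem_image.mp h
      exact hβpos a b m (Or.inr hm)
  -- the PSD matrix Cβ = -lapl β
  set Cβ : Matrix (Fin N) (Fin N) ℝ := lapl (fun a b => -β a b) with hCdef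
  have hC : Cβ.IsHermitian :=
    lapl_isHermitian _ (fun a b => by rw [hβsym a b])
  have hCform : ∀ x : Fin N → ℝ,
      x ⬝ᵥ Cβ.mulVec x = (1/2) * ∑ i, ∑ j, β i j * (x i - x j)^2 := by
    intro x
    rw [hCdef, lapl_form _ (fun a b => by rw [hβsym a b]) (fun a => by rw [hβdiag a, neg_zero])]
    have hneg : ∑ i, ∑ j, (-β i j) * (x i - x j)^2
        = -∑ i, ∑ j, β i j * (x i - x j)^2 := by
      rw [← Finset.sum_neg_distrib]
      congr 1; funext i
      rw [← Finset.sum_neg_distrib]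
      congr 1; funext j
      ring
    rw [hneg]
    ring
  have hCpsd : ∀ x : Fin N → ℝ, 0 ≤ x ⬝ᵥ Cβ.mulVec x := by
    intro x
    rw [hCform]
    apply mul_nonneg (by norm_num)
    apply Finset.sum_nonneg
    intro i _
    apply Finset.sum_nonneg
    intro j _
    exact mul_nonneg (hβnonneg i j) (sq_nonneg _)
  have hCev : ∀ i, 0 ≤ hC.eigenvalues i := by
    intro i
    have h1 := eb_dot_mulVec hC (⇑(hC.eigenvectorBasis i)) i
    have h2 : ecoord hC (⇑(hC.eigenvectorBasis i)) i = 1 := by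
      show ⇑(hC.eigenvectorBasis i) ⬝ᵥ ⇑(hC.eigenvectorBasis i) = 1
      rw [eb_dot_eb, if_pos rfl]
    rw [h2, mul_one] at h1
    rw [← h1]
    exact hCpsd _
  -- kernel of Cβ is the space of functions constant on red components
  set U := LinearMap.range (compMap G) with hUdef
  have hker : LinearMap.ker Cβ.mulVecLin = U := by
    ext x
    rw [LinearMap.mem_ker, Matrix.mulVecLin_apply, hUdef, mem_range_compMap_iff]
    constructor
    · intro h a b hab
      have hform : x ⬝ᵥ Cβ.mulVec x = 0 := by rw [h, dotProduct_zero]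
      rw [hCform] at hform
      have hsum : ∑ i, ∑ j, β i j * (x i - x j)^2 = 0 := by linarith
      have houter := (Finset.sum_eq_zero_iff_of_nonneg (fun i _ =>
        Finset.sum_nonneg (fun j _ => mul_nonneg (hβnonneg i j) (sq_nonneg _)))).mp hsum
        a (Finset.mem_univ a)
      have hterm := (Finset.sum_eq_zero_iff_of_nonneg (fun j _ =>
        mul_nonneg (hβnonneg a j) (sq_nonneg _))).mp houter b (Finset.mem_univ b)
      have hb := hadj_β a b hab
      have hsq : (x a - x b)^2 = 0 := by
        rcases mul_eq_zero.mp hterm with h' | h'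
        · exact absurd h' (ne_of_gt hb)
        · exact h'
      have := pow_eq_zero_iff (n := 2) (by norm_num) |>.mp hsq
      linarith [this]
    · intro h
      apply lapl_mulVec_eq_zero _ (fun a => by rw [hβdiag a, neg_zero]) x
      intro i j hne
      have hb : β i j ≠ 0 := fun h0 => hne (by rw [h0, neg_zero])
      exact h i j (hβne_adj i j hb)
  have hc_szero : (univ.filter fun i => hC.eigenvalues i = 0).card = c := by
    rw [← finrank_ker_eq hC, hker, hUdef, finrank_range_compMap, hcdef]
  have hneg0 : (univ.filter fun i => hC.eigenvalues i < 0) = ∅ := by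
    rw [Finset.filter_eq_empty_iff]
    intro i _
    exact not_lt.mpr (hCev i)
  have hsum3 := counts_sum hC
  rw [hneg0, Finset.card_empty, hc_szero] at hsum3
  set Sp := univ.filter (fun i => 0 < hC.eigenvalues i) with hSpdef
  have hSp_card : Sp.card = N - c := by omega
  have hcleN : c ≤ N := by omega
  have hcpos : 0 < c := by
    rw [hcdef]
    exact card_components_pos G hN
  -- lower bound on positive eigenvalues of Cβ
  obtain ⟨μ, hμpos, hμle⟩ : ∃ μ : ℝ, 0 < μ ∧ ∀ i ∈ Sp, μ ≤ hC.eigenvalues i := by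
    rcases Sp.eq_empty_or_nonempty with h | h
    · exact ⟨1, one_pos, by simp [h]⟩
    · have hne : (Sp.image hC.eigenvalues).Nonempty := h.image _
      refine ⟨(Sp.image hC.eigenvalues).min' hne, ?_, fun i hi =>
        Finset.min'_le _ _ (Finset.mem_image_of_mem _ hi)⟩
      have hmem := (Sp.image hC.eigenvalues).min'_mem hne
      obtain ⟨i, hi, hieq⟩ := Finset.mem_image.mp hmem
      rw [hSpdef, Finset.mem_filter] at hi
      rw [← hieq]
      exact hi.2
  -- bound for the black part
  set M := 2 * ∑ i, ∑ j, γ i j with hMdef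
  have hMnn : 0 ≤ M := by
    rw [hMdef]
    have : 0 ≤ ∑ i, ∑ j, γ i j :=
      Finset.sum_nonneg fun i _ => Finset.sum_nonneg fun j _ => hpos i j
    linarith
  have hdot_pos : ∀ x : Fin N → ℝ, x ≠ 0 → 0 < x ⬝ᵥ x := by
    intro x hx
    obtain ⟨i, hi⟩ := Function.ne_iff.mp hx
    have h1 : (0:ℝ) < x i * x i := by
      have hxi : x i ≠ 0 := hi
      exact mul_self_pos.mpr hxi
    have h2 : x i * x i ≤ ∑ j, x j * x j :=
      Finset.single_le_sum (f := fun j => x j * x j)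
        (fun j _ => mul_self_nonneg (x j)) (Finset.mem_univ i)
    calc (0:ℝ) < x i * x i := h1
      _ ≤ ∑ j, x j * x j := h2
      _ = x ⬝ᵥ x := rfl
  have hsq_le : ∀ (x : Fin N → ℝ) (i : Fin N), x i ^ 2 ≤ x ⬝ᵥ x := by
    intro x i
    have h2 : x i * x i ≤ ∑ j, x j * x j :=
      Finset.single_le_sum (f := fun j => x j * x j)
        (fun j _ => mul_self_nonneg (x j)) (Finset.mem_univ i)
    calc x i ^ 2 = x i * x i := sq (x i) ▸ rfl
      _ ≤ ∑ j, x j * x j := h2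
      _ = x ⬝ᵥ x := rfl
  have hQγ_lb : ∀ x : Fin N → ℝ,
      -(M * (x ⬝ᵥ x)) ≤ -(1/2) * ∑ i, ∑ j, γ i j * (x i - x j)^2 := by
    intro x
    have hterm : ∀ i j : Fin N, γ i j * (x i - x j)^2 ≤ γ i j * (4 * (x ⬝ᵥ x)) := by
      intro i j
      apply mul_le_mul_of_nonneg_left _ (hpos i j)
      have h1 := hsq_le x i
      have h2 := hsq_le x j
      nlinarith [sq_nonneg (x i + x j)]
    have hs : ∑ i, ∑ j, γ i j * (x i - x j)^2 ≤ ∑ i, ∑ j, γ i j * (4 * (x ⬝ᵥ x)) :=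
      Finset.sum_le_sum fun i _ => Finset.sum_le_sum fun j _ => hterm i j
    have hval : ∑ i, ∑ j, γ i j * (4 * (x ⬝ᵥ x)) = (∑ i, ∑ j, γ i j) * (4 * (x ⬝ᵥ x)) := by
      rw [Finset.sum_mul]
      congr 1; funext i
      rw [Finset.sum_mul]
    rw [hval] at hs
    rw [hMdef]
    have hxx : 0 ≤ x ⬝ᵥ x := by
      rcases eq_or_ne x 0 with h | h
      · rw [h]; simp
      · exact le_of_lt (hdot_pos x h)
    nlinarith
  -- choose t₀
  refine ⟨M / μ + 1, by have := div_nonneg hMnn (le_of_lt hμpos); linarith, ?_⟩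
  intro t ht hH
  set w : Fin N → Fin N → ℝ := fun a b => γ a b -
      ∑ m ∈ univ.filter (fun m => e m = (a, b) ∨ e m = (b, a)), t * α m with hwdef
  have hwt : ∀ a b, w a b = γ a b - t * β a b := by
    intro a b
    show γ a b - (∑ m ∈ univ.filter (fun m => e m = (a, b) ∨ e m = (b, a)), t * α m) = _
    rw [← Finset.mul_sum]
  have hwsym : ∀ a b, w a b = w b a := by
    intro a b
    rw [hwt a b, hwt b a, hsym a b, hβsym a b]
  have hwdiag : ∀ a, w a a = 0 := by
    intro a
    rw [hwt, hdiag, hβdiag, mul_zero, sub_zero]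
  have hLform : ∀ x : Fin N → ℝ,
      x ⬝ᵥ (lapl w).mulVec x
        = (-(1/2) * ∑ i, ∑ j, γ i j * (x i - x j)^2) + t * (x ⬝ᵥ Cβ.mulVec x) := by
    intro x
    rw [lapl_form w hwsym hwdiag, hCform]
    have hsplit : ∑ i, ∑ j, w i j * (x i - x j)^2
        = ∑ i, ∑ j, γ i j * (x i - x j)^2 - t * ∑ i, ∑ j, β i j * (x i - x j)^2 := by
      rw [Finset.mul_sum, ← Finset.sum_sub_distrib]
      congr 1; funext i
      rw [Finset.mul_sum, ← Finset.sum_sub_distrib]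
      congr 1; funext j
      rw [hwt i j]; ring
    rw [hsplit]; ring
  -- the sum functional on U
  set σ : (Fin N → ℝ) →ₗ[ℝ] ℝ :=
    { toFun := fun x => ∑ i, x i,
      map_add' := by intro x y; simp [Finset.sum_add_distrib],
      map_smul' := by intro r x; simp [Finset.mul_sum] } with hσdef
  set σU := σ.comp U.subtype with hσUdef
  have hone : (fun _ => (1:ℝ)) ∈ U := by rw [hUdef]; exact ⟨fun _ => 1, rfl⟩
  have hσ1 : σU ⟨fun _ => (1:ℝ), hone⟩ = (N:ℝ) := by
    show ∑ _i : Fin N, (1:ℝ) = (N:ℝ)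
    simp
  have hσU_surj : Function.Surjective σU := by
    intro r
    refine ⟨(r / N) • ⟨fun _ => (1:ℝ), hone⟩, ?_⟩
    rw [_root_.map_smul, hσ1, smul_eq_mul]
    have hNne : (N:ℝ) ≠ 0 := Nat.cast_ne_zero.mpr (by omega : N ≠ 0)
    field_simp
  have hrange_top : LinearMap.range σU = ⊤ := LinearMap.range_eq_top.mpr hσU_surj
  have hUrank : Module.finrank ℝ U = c := by rw [hUdef, finrank_range_compMap, hcdef]
  have hkerσ : Module.finrank ℝ (LinearMap.ker σU) = c - 1 := by
    have h := LinearMap.finrank_range_add_finrank_ker σU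
    rw [hrange_top, finrank_top, hUrank, Module.finrank_self] at h
    omega
  set Wneg := Submodule.map U.subtype (LinearMap.ker σU) with hWdef
  have hWrank : Module.finrank ℝ Wneg = c - 1 := by
    rw [hWdef, Submodule.finrank_map_subtype_eq]
    exact hkerσ
  have hWneg : ∀ x ∈ Wneg, x ≠ 0 → x ⬝ᵥ (lapl w).mulVec x < 0 := by
    intro x hx hx0
    rw [hWdef] at hx
    obtain ⟨y, hyker, hyx⟩ := Submodule.mem_map.mp hx
    have hxU : x ∈ U := by rw [← hyx]; exact y.2
    have hσy : ∑ i, x i = 0 := by rw [← hyx]; exact LinearMap.mem_ker.mp hyker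
    have hyconstβ : ∀ a b, G.Adj a b → x a = x b :=
      (mem_range_compMap_iff G _).mp hxU
    have hCzero : x ⬝ᵥ Cβ.mulVec x = 0 := by
      rw [hCform]
      rw [Finset.sum_eq_zero, mul_zero]
      intro i _
      apply Finset.sum_eq_zero
      intro j _
      by_cases hb : β i j = 0
      · rw [hb, zero_mul]
      · rw [hyconstβ i j (hβne_adj i j hb)]
        ring
    have hQneg : -(1/2) * ∑ i, ∑ j, γ i j * (x i - x j)^2 < 0 := by
      have hnn : ∀ i ∈ (univ : Finset (Fin N)),
          (0:ℝ) ≤ ∑ j, γ i j * (x i - x j)^2 := fun i _ =>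
        Finset.sum_nonneg fun j _ => mul_nonneg (hpos i j) (sq_nonneg _)
      have hSnn : (0:ℝ) ≤ ∑ i, ∑ j, γ i j * (x i - x j)^2 :=
        Finset.sum_nonneg hnn
      rcases eq_or_lt_of_le hSnn with hS0 | hSpos
      · exfalso
        have hγconst : ∀ i j, γ i j ≠ 0 → x i = x j := by
          intro i j hg
          have houter := (Finset.sum_eq_zero_iff_of_nonneg hnn).mp hS0.symm i (Finset.mem_univ i)
          have hterm := (Finset.sum_eq_zero_iff_of_nonneg (fun j _ =>
            mul_nonneg (hpos i j) (sq_nonneg _))).mp houter j (Finset.mem_univ j)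
          rcases mul_eq_zero.mp hterm with h' | h'
          · exact absurd h' hg
          · have := pow_eq_zero_iff (n := 2) (by norm_num) |>.mp h'
            linarith [this]
        have hfull : ∀ a b, (edgeGraph (blackE γ ∪ univ.image e)).Adj a b →
            x a = x b := by
          intro a b hab
          unfold edgeGraph at hab
          rw [SimpleGraph.fromRel_adj] at hab
          obtain ⟨hne, hmem⟩ := hab
          rcases hmem with h | h <;> rw [Finset.mem_union] at h <;> rcases h with h | h
          · exact hγconst a b (Finset.mem_filter.mp h).2.2
          · obtain ⟨m, _, hm⟩ := Finset.mem_image.mp h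
            exact hyconstβ a b (hβne_adj a b (ne_of_gt (hβpos a b m (Or.inl hm))))
          · exact (hγconst b a (Finset.mem_filter.mp h).2.2).symm
          · obtain ⟨m, _, hm⟩ := Finset.mem_image.mp h
            exact hyconstβ a b (hβne_adj a b (ne_of_gt (hβpos a b m (Or.inr hm))))
        set i0 : Fin N := ⟨0, hN⟩
        have hconst : ∀ i, x i = x i0 := fun i =>
          reachable_const _ _ hfull (hconn.preconnected i i0)
        have hsum0 : ∑ i, x i = N * x i0 := by
          rw [Finset.sum_congr rfl (fun i _ => hconst i)]
          simp [mul_comm]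
        rw [hσy] at hsum0
        have hNne : (N:ℝ) ≠ 0 := Nat.cast_ne_zero.mpr (by omega : N ≠ 0)
        have hy0 : x i0 = 0 := by
          rcases mul_eq_zero.mp hsum0.symm with h' | h'
          · exact absurd h' hNne
          · exact h' 
        apply hx0
        funext i
        rw [hconst i, hy0]
        rfl
      · linarith
    rw [hLform, hCzero, mul_zero, add_zero]
    exact hQneg
  have ht0 : (0:ℝ) < t := by
    have := div_nonneg hMnn (le_of_lt hμpos)
    linarith
  set Wpos := espan hC Sp with hWposdef
  have hWpos : ∀ x ∈ Wpos, x ≠ 0 → 0 < x ⬝ᵥ (lapl w).mulVec x := by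
    intro x hx hx0
    have hxx := hdot_pos x hx0
    have hCx : μ * (x ⬝ᵥ x) ≤ x ⬝ᵥ Cβ.mulVec x := by
      rw [form_expand hC x, parseval hC x, Finset.mul_sum]
      apply Finset.sum_le_sum
      intro i _
      by_cases hi : i ∈ Sp
      · exact mul_le_mul_of_nonneg_right (hμle i hi) (sq_nonneg _)
      · rw [(mem_espan_iff hC Sp x).mp hx i hi]
        simp
    have h2 : t * (μ * (x ⬝ᵥ x)) ≤ t * (x ⬝ᵥ Cβ.mulVec x) :=
      mul_le_mul_of_nonneg_left hCx (le_of_lt ht0)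
    have hdiv : M / μ * μ = M := div_mul_cancel₀ M (ne_of_gt hμpos)
    have h3 : M + μ ≤ t * μ := by nlinarith [ht, hμpos]
    have h4 : (M + μ) * (x ⬝ᵥ x) ≤ (t * μ) * (x ⬝ᵥ x) :=
      mul_le_mul_of_nonneg_right h3 (le_of_lt hxx)
    rw [hLform x]
    nlinarith [hQγ_lb x, h2, hxx, hμpos, h4]
  have hnegCount : c - 1 ≤ (univ.filter fun i => hH.eigenvalues i < 0).card := by
    have h := negCount_ge hH Wneg hWneg
    rw [hWrank] at h
    exact h
  have hposCount : N - c ≤ (univ.filter fun i => 0 < hH.eigenvalues i).card := by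
    have h := posCount_ge hH Wpos hWpos
    rw [hWposdef, finrank_espan, hSp_card] at h
    exact h
  have hzeroCount : 1 ≤ (univ.filter fun i => hH.eigenvalues i = 0).card := by
    apply zeroCount_ge hH (fun _ => (1:ℝ))
    · intro hcon
      have := congrFun hcon ⟨0, hN⟩
      exact one_ne_zero this
    · exact lapl_mulVec_const w hwdiag 1
  have htotal := counts_sum hH
  refine ⟨?_, ?_, ?_⟩
  · show (univ.filter fun i => hH.eigenvalues i < 0).card = c - 1
    omega
  · show (univ.filter fun i => hH.eigenvalues i = 0).card = 1
    omega
  · show (univ.filter fun i => 0 < hH.eigenvalues i).card = N - c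
    omega
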